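/- Let u : ℝ → ℝ be 3 times continuously differentiable (ContDiff ℝ 3) and fix x ∈ ℝ. Then each of the three sub-stencil interpolation errors h ↦ u(x + h/2) - ( -(5/4)·u(x-h) + (9/4)·u(x) - (3h/4)·u'(x-h) ), h ↦ u(x + h/2) - ( (1/4)·u(x) + (3/4)·u(x+h) - (h/4)·u'(x+h) ), and h ↦ u(x + h/2) - ( -(1/8)·u(x-h) + (3/4)·u(x) + (3/8)·u(x+h) ) is O(h³) as h → 0 (IsBigO with respect to the filter 𝓝 0 of the function h ↦ h³), where u' denotes the derivative of u. -/

import Mathlib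

open Asymptotics

/-- Integrating a big-O bound on the derivative: if `R 0 = 0` and
`deriv R = O(t^n)` at `0`, then `R = O(t^(n+1))` at `0`. -/
lemma integrate_bigO {R : ℝ → ℝ} {n : ℕ} (h0 : R 0 = 0) (hR : Differentiable ℝ R)
    (hd : (deriv R) =O[nhds 0] fun t : ℝ => t ^ n) :
    R =O[nhds 0] fun t : ℝ => t ^ (n + 1) := by
  rcases Asymptotics.isBigO_iff.mp hd with ⟨C, hC⟩
  rw [Metric.eventually_nhds_iff] at hC
  obtain ⟨δ, hδ, hB⟩ := hC
  -- C ≥ 0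
  have hC0 : 0 ≤ C := by
    have h1 := hB (y := δ / 2) (by
      simp only [dist_zero_right, Real.norm_eq_abs, abs_of_pos (by linarith : (0:ℝ) < δ / 2)]
      linarith)
    have h2 : 0 < ‖(δ / 2) ^ n‖ := by
      rw [Real.norm_eq_abs, abs_pos]
      exact pow_ne_zero _ (by linarith)
    nlinarith [norm_nonneg (deriv R (δ / 2))]
  rw [Asymptotics.isBigO_iff]
  refine ⟨C, Filter.Eventually.mono (Metric.ball_mem_nhds (0:ℝ) hδ) fun h hh => ?_⟩
  simp only [Metric.mem_ball, dist_zero_right, Real.norm_eq_abs] at hh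
  have key : ∀ t ∈ segment ℝ (0:ℝ) h, ‖deriv R t‖ ≤ C * |h| ^ n := by
    intro t ht
    rcases ht with ⟨a, b, ha, hb, hab, rfl⟩
    have hth : |a • (0:ℝ) + b • h| ≤ |h| := by
      simp only [smul_eq_mul, mul_zero, zero_add, abs_mul]
      calc |b| * |h| = b * |h| := by rw [abs_of_nonneg hb]
        _ ≤ 1 * |h| := by
            apply mul_le_mul_of_nonneg_right _ (abs_nonneg h)
            linarith
        _ = |h| := one_mul _
    have hmem : dist (a • (0:ℝ) + b • h) 0 < δ := by
      rw [dist_zero_right, Real.norm_eq_abs]; exact lt_of_le_of_lt hth hh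
    have := hB hmem
    rw [Real.norm_eq_abs ((a • (0:ℝ) + b • h) ^ n), abs_pow] at this
    refine this.trans ?_
    exact mul_le_mul_of_nonneg_left (pow_le_pow_left₀ (abs_nonneg _) hth n) hC0
  have hmvt := (convex_segment (0:ℝ) h).norm_image_sub_le_of_norm_hasDerivWithin_le
    (f := R) (f' := deriv R)
    (fun t _ => (hR t).hasDerivAt.hasDerivWithinAt) key
    (left_mem_segment ℝ (0:ℝ) h) (right_mem_segment ℝ (0:ℝ) h)
  rw [h0, sub_zero, sub_zero] at hmvt
  calc ‖R h‖ ≤ C * |h| ^ n * ‖h‖ := hmvt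
    _ = C * ‖h ^ (n + 1)‖ := by
        rw [Real.norm_eq_abs, Real.norm_eq_abs, abs_pow, pow_succ]; ring

lemma hasDerivAt_shift {f : ℝ → ℝ} (hf : Differentiable ℝ f) (x h : ℝ) :
    HasDerivAt (fun t => f (x + t)) (deriv f (x + h)) h := by
  simpa [Function.comp_def] using ((hf (x + h)).hasDerivAt).comp h ((hasDerivAt_id h).const_add x)

/-- First-order Taylor remainder is `O(h)` for `C¹` functions. -/
lemma taylor0 {f : ℝ → ℝ} (hf : ContDiff ℝ 1 f) (x : ℝ) :
    (fun h : ℝ => f (x + h) - f x) =O[nhds 0] fun h : ℝ => h ^ 1 := by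
  obtain ⟨hdiff, hcont⟩ := contDiff_one_iff_deriv.mp hf
  have hR : ∀ h : ℝ, HasDerivAt (fun h : ℝ => f (x + h) - f x) (deriv f (x + h)) h :=
    fun h => (hasDerivAt_shift hdiff x h).sub_const _
  have hder : deriv (fun h : ℝ => f (x + h) - f x) = fun h => deriv f (x + h) :=
    funext fun h => (hR h).deriv
  refine integrate_bigO (by simp) (fun h => (hR h).differentiableAt) ?_
  rw [hder]
  have htend : Filter.Tendsto (fun h : ℝ => deriv f (x + h)) (nhds 0) (nhds (deriv f x)) := by
    have : Filter.Tendsto (fun h : ℝ => x + h) (nhds 0) (nhds x) := by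
      simpa [Pi.add_def] using (continuous_const.add continuous_id).tendsto (0:ℝ)
    exact (hcont.tendsto x).comp this
  simpa using htend.isBigO_one ℝ

/-- Second-order Taylor remainder is `O(h²)` for `C²` functions. -/
lemma taylor1 {f : ℝ → ℝ} (hf : ContDiff ℝ 2 f) (x : ℝ) :
    (fun h : ℝ => f (x + h) - f x - h * deriv f x) =O[nhds 0] fun h : ℝ => h ^ 2 := by
  have h21 : (2 : WithTop ℕ∞) = 1 + 1 := by norm_num
  have hsplit := contDiff_succ_iff_deriv.mp (h21 ▸ hf)
  have hdiff : Differentiable ℝ f := hsplit.1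
  have hf' : ContDiff ℝ 1 (deriv f) := hsplit.2.2
  have hR : ∀ h : ℝ, HasDerivAt (fun h : ℝ => f (x + h) - f x - h * deriv f x)
      (deriv f (x + h) - deriv f x) h := by
    intro h
    have h1 := ((hasDerivAt_shift hdiff x h).sub_const (f x)).sub
      (hasDerivAt_mul_const (deriv f x) (x := h))
    exact h1
  have hder : deriv (fun h : ℝ => f (x + h) - f x - h * deriv f x)
      = fun h => deriv f (x + h) - deriv f x := funext fun h => (hR h).deriv
  refine integrate_bigO (by simp) (fun h => (hR h).differentiableAt) ?_
  rw [hder]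
  exact taylor0 hf' x

/-- Third-order Taylor remainder is `O(h³)` for `C³` functions. -/
lemma taylor2 {f : ℝ → ℝ} (hf : ContDiff ℝ 3 f) (x : ℝ) :
    (fun h : ℝ => f (x + h) - f x - h * deriv f x - h ^ 2 / 2 * deriv (deriv f) x)
      =O[nhds 0] fun h : ℝ => h ^ 3 := by
  have h32 : (3 : WithTop ℕ∞) = 2 + 1 := by norm_num
  have hsplit := contDiff_succ_iff_deriv.mp (h32 ▸ hf)
  have hdiff : Differentiable ℝ f := hsplit.1
  have hf' : ContDiff ℝ 2 (deriv f) := hsplit.2.2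
  have hR : ∀ h : ℝ, HasDerivAt
      (fun h : ℝ => f (x + h) - f x - h * deriv f x - h ^ 2 / 2 * deriv (deriv f) x)
      (deriv f (x + h) - deriv f x - h * deriv (deriv f) x) h := by
    intro h
    have hpoly : HasDerivAt (fun h : ℝ => h ^ 2 / 2 * deriv (deriv f) x)
        (h * deriv (deriv f) x) h := by
      have := (((hasDerivAt_pow 2 h).div_const 2).mul_const (deriv (deriv f) x))
      refine this.congr_deriv ?_
      norm_num
    have h1 := (((hasDerivAt_shift hdiff x h).sub_const (f x)).sub
      (hasDerivAt_mul_const (deriv f x) (x := h))).sub hpoly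
    exact h1
  have hder : deriv (fun h : ℝ => f (x + h) - f x - h * deriv f x
      - h ^ 2 / 2 * deriv (deriv f) x)
      = fun h => deriv f (x + h) - deriv f x - h * deriv (deriv f) x :=
    funext fun h => (hR h).deriv
  refine integrate_bigO (by simp) (fun h => (hR h).differentiableAt) ?_
  rw [hder]
  exact taylor1 hf' x

/-- Composing a big-O at 0 with scaling. -/
lemma bigO_comp_scale {f : ℝ → ℝ} {n : ℕ} (hf : f =O[nhds 0] fun t : ℝ => t ^ n) (c : ℝ) :
    (fun h : ℝ => f (c * h)) =O[nhds 0] fun h : ℝ => h ^ n := by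
  have ht : Filter.Tendsto (fun h : ℝ => c * h) (nhds 0) (nhds 0) := by
    simpa [Pi.mul_def] using (continuous_const.mul continuous_id).tendsto (0:ℝ)
  have h1 := hf.comp_tendsto ht
  refine h1.trans ?_
  have h2 : ((fun t : ℝ => t ^ n) ∘ fun h : ℝ => c * h) = fun h : ℝ => c ^ n * h ^ n := by
    funext h; simp [mul_pow]
  rw [h2]
  exact (isBigO_refl _ _).const_mul_left _

theorem substencil_value_interpolations_third_order
    (u : ℝ → ℝ) (hu : ContDiff ℝ 3 u) (x : ℝ) :
    ((fun h : ℝ =>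
        u (x + h / 2) -
          (-(5/4) * u (x - h) + (9/4) * u x - (3 * h / 4) * deriv u (x - h)))
        =O[nhds 0] fun h : ℝ => h ^ 3)
    ∧ ((fun h : ℝ =>
        u (x + h / 2) -
          ((1/4) * u x + (3/4) * u (x + h) - (h / 4) * deriv u (x + h)))
        =O[nhds 0] fun h : ℝ => h ^ 3)
    ∧ ((fun h : ℝ =>
        u (x + h / 2) -
          (-(1/8) * u (x - h) + (3/4) * u x + (3/8) * u (x + h)))
        =O[nhds 0] fun h : ℝ => h ^ 3) := by
  set d1 := deriv u x with hd1
  set d2 := deriv (deriv u) x with hd2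
  have h32 : (3 : WithTop ℕ∞) = 2 + 1 := by norm_num
  have hu' : ContDiff ℝ 2 (deriv u) := (contDiff_succ_iff_deriv.mp (h32 ▸ hu)).2.2
  -- scaled third-order Taylor remainders
  have key : ∀ c : ℝ, (fun h : ℝ =>
      u (x + c * h) - u x - (c * h) * d1 - (c * h) ^ 2 / 2 * d2) =O[nhds 0]
      fun h : ℝ => h ^ 3 :=
    fun c => bigO_comp_scale (taylor2 hu x) c
  -- scaled second-order remainders for the derivative, multiplied by h
  have key2 : ∀ c : ℝ, (fun h : ℝ =>
      h * (deriv u (x + c * h) - d1 - (c * h) * d2)) =O[nhds 0]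
      fun h : ℝ => h ^ 3 := by
    intro c
    have hS : (fun h : ℝ => deriv u (x + c * h) - d1 - (c * h) * d2) =O[nhds 0]
        fun h : ℝ => h ^ 2 := by
      have := bigO_comp_scale (taylor1 hu' x) c
      simpa [hd1, hd2] using this
    have hmul := (isBigO_refl (fun h : ℝ => h) (nhds 0)).mul hS
    have h3 : (fun h : ℝ => h * h ^ 2) = fun h : ℝ => h ^ 3 := by funext h; ring
    rwa [h3] at hmul
  refine ⟨?_, ?_, ?_⟩
  · have hcomb := ((key (1/2)).add ((key (-1)).const_mul_left (5/4))).add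
      ((key2 (-1)).const_mul_left (3/4))
    have heq : (fun h : ℝ =>
        u (x + h / 2) -
          (-(5/4) * u (x - h) + (9/4) * u x - (3 * h / 4) * deriv u (x - h)))
        = fun h : ℝ =>
          (u (x + 1/2 * h) - u x - (1/2 * h) * d1 - (1/2 * h) ^ 2 / 2 * d2)
          + 5/4 * (u (x + -1 * h) - u x - (-1 * h) * d1 - (-1 * h) ^ 2 / 2 * d2)
          + 3/4 * (h * (deriv u (x + -1 * h) - d1 - (-1 * h) * d2)) := by
      funext h
      have e1 : x + h / 2 = x + 1/2 * h := by ring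
      have e2 : x - h = x + -1 * h := by ring
      rw [e1, e2]
      ring
    rw [heq]
    exact hcomb
  · have hcomb := ((key (1/2)).add ((key 1).const_mul_left (-(3/4)))).add
      ((key2 1).const_mul_left (1/4))
    have heq : (fun h : ℝ =>
        u (x + h / 2) -
          ((1/4) * u x + (3/4) * u (x + h) - (h / 4) * deriv u (x + h)))
        = fun h : ℝ =>
          (u (x + 1/2 * h) - u x - (1/2 * h) * d1 - (1/2 * h) ^ 2 / 2 * d2)
          + -(3/4) * (u (x + 1 * h) - u x - (1 * h) * d1 - (1 * h) ^ 2 / 2 * d2)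
          + 1/4 * (h * (deriv u (x + 1 * h) - d1 - (1 * h) * d2)) := by
      funext h
      have e1 : x + h / 2 = x + 1/2 * h := by ring
      have e2 : x + h = x + 1 * h := by ring
      rw [e1, e2]
      ring
    rw [heq]
    exact hcomb
  · have hcomb := ((key (1/2)).add ((key (-1)).const_mul_left (1/8))).add
      ((key 1).const_mul_left (-(3/8)))
    have heq : (fun h : ℝ =>
        u (x + h / 2) -
          (-(1/8) * u (x - h) + (3/4) * u x + (3/8) * u (x + h)))
        = fun h : ℝ =>
          (u (x + 1/2 * h) - u x - (1/2 * h) * d1 - (1/2 * h) ^ 2 / 2 * d2)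
          + 1/8 * (u (x + -1 * h) - u x - (-1 * h) * d1 - (-1 * h) ^ 2 / 2 * d2)
          + -(3/8) * (u (x + 1 * h) - u x - (1 * h) * d1 - (1 * h) ^ 2 / 2 * d2) := by
      funext h
      have e1 : x + h / 2 = x + 1/2 * h := by ring
      have e2 : x - h = x + -1 * h := by ring
      have e3 : x + h = x + 1 * h := by ring
      rw [e1, e2, e3]
      ring
    rw [heq]
    exact hcomb
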